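/- Fix r ≥ 0 and integers n ≥ k ≥ 1. Let z be the sequence z_j = j! · C(j + r, r + 1) for j ≥ 1. Then B_{n,k}(z₁, z₂, …) = (n!/k!) · C(n + (r+1)k − 1, n − k). -/

import Mathlib

/-- The invert transform of a sequence `x : ℕ → ℚ` (indexed from 1, `x 0` ignored):
`(𝒴x)(0) = 0` and `(𝒴x)(n) = x n + ∑_{j=1}^{n-1} x j * (𝒴x)(n-j)` for `n ≥ 1`. -/
def invert (x : ℕ → ℚ) : ℕ → ℚ
  | 0 => 0
  | n + 1 => x (n + 1) + ∑ j ∈ Finset.range n, x (j + 1) * invert x (n - j)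
  termination_by n => n
  decreasing_by omega

/-- The partial Bell polynomial `B_{n,k}(z₁, z₂, …)`, evaluated at a sequence of rationals
`z` (indexed from 1, `z 0` ignored): the sum over all finitely supported `α : ℕ → ℕ` with
`α 0 = 0`, `∑ i, α i = k` and `∑ i, i * α i = n` of `(n! / ∏ i, (α i)!) * ∏ i (z i / i!)^(α i)`. -/
def partialBell (n k : ℕ) (z : ℕ → ℚ) : ℚ :=
  ∑ α ∈ ((Finset.range (n + 1)).finsuppAntidiag k).filter
      (fun α => (∑ i ∈ Finset.range (n + 1), i * α i) = n ∧ α 0 = 0),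
    ((n.factorial : ℚ) / ∏ i ∈ Finset.range (n + 1), ((α i).factorial : ℚ)) *
      ∏ i ∈ Finset.range (n + 1), (z i / (i.factorial : ℚ)) ^ α i

open Finset PowerSeries

private lemma sum_finsuppAntidiag_eq {ι : Type*} [DecidableEq ι] (s : Finset ι) (n : ℕ)
    (G : (ι → ℕ) → ℚ) :
    ∑ α ∈ s.finsuppAntidiag n, G ⇑α = ∑ f ∈ s.piAntidiag n, G f := by
  rw [Finset.finsuppAntidiag, Finset.sum_map]
  exact Finset.sum_attach _ _

private lemma invOneSubPow_pow (d k : ℕ) :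
    (invOneSubPow ℚ d) ^ k = invOneSubPow ℚ (d * k) := by
  apply inv_injective
  apply Units.ext
  rw [← inv_pow, Units.val_pow_eq_pow_val, ← Units.inv_eq_val_inv, ← Units.inv_eq_val_inv,
    invOneSubPow_inv_eq_one_sub_pow, invOneSubPow_inv_eq_one_sub_pow, ← pow_mul]

/-- Bell identity 4: for `r ≥ 0` and `n ≥ k ≥ 1`, with `z_j = j!·C(j+r, r+1)`,
`B_{n,k}(z₁, z₂, …) = (n!/k!) C(n+(r+1)k-1, n-k)`. -/
theorem stmt_19 (r : ℕ) (n k : ℕ) (hk : 1 ≤ k) (hkn : k ≤ n)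
    (z : ℕ → ℚ) (hz : ∀ j, 1 ≤ j → z j = (j.factorial : ℚ) * ((j + r).choose (r + 1) : ℚ)) :
    partialBell n k z
      = ((n.factorial : ℚ) / (k.factorial : ℚ)) *
          ((n + (r + 1) * k - 1).choose (n - k) : ℚ) := by
  unfold partialBell
  classical
  set s := Finset.range (n + 1) with hs
  set d : ℕ → ℚ := fun i => if i = 0 then 0 else ((i + r).choose (r + 1) : ℚ) with hd
  set P : Polynomial ℚ := ∑ i ∈ s, Polynomial.C (d i) * Polynomial.X ^ i with hP
  -- coefficient of P^k via the multinomial theorem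
  have hPk : (P ^ k).coeff n = ∑ f ∈ s.piAntidiag k,
      (if (∑ i ∈ s, i * f i) = n then
        (Nat.multinomial s f : ℚ) * ∏ i ∈ s, d i ^ f i else 0) := by
    rw [hP, Finset.sum_pow_eq_sum_piAntidiag, Polynomial.finset_sum_coeff]
    refine Finset.sum_congr rfl fun f hf => ?_
    have hprod : ∏ i ∈ s, (Polynomial.C (d i) * Polynomial.X ^ i) ^ f i
        = Polynomial.C (∏ i ∈ s, d i ^ f i) * Polynomial.X ^ (∑ i ∈ s, i * f i) := by
      simp_rw [mul_pow, ← pow_mul, ← Polynomial.C_pow, Finset.prod_mul_distrib, map_prod,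
        Finset.prod_pow_eq_pow_sum]
    rw [hprod, ← mul_assoc, (Polynomial.C_eq_natCast (Nat.multinomial s f)).symm, ← map_mul,
      Polynomial.coeff_C_mul, Polynomial.coeff_X_pow]
    by_cases h : (∑ i ∈ s, i * f i) = n
    · rw [if_pos h.symm, if_pos h, mul_one]
    · rw [if_neg (fun hh => h hh.symm), if_neg h, mul_zero]
  -- LHS equals (n!/k!) * coeff n (P^k)
  have hA : (∑ α ∈ (s.finsuppAntidiag k).filter
      (fun α => (∑ i ∈ s, i * α i) = n ∧ α 0 = 0),
    ((n.factorial : ℚ) / ∏ i ∈ s, ((α i).factorial : ℚ)) *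
      ∏ i ∈ s, (z i / (i.factorial : ℚ)) ^ α i)
      = ((n.factorial : ℚ) / (k.factorial : ℚ)) * (P ^ k).coeff n := by
    rw [Finset.sum_filter, hPk, Finset.mul_sum,
      sum_finsuppAntidiag_eq s k (fun f => if (∑ i ∈ s, i * f i) = n ∧ f 0 = 0 then
        ((n.factorial : ℚ) / ∏ i ∈ s, ((f i).factorial : ℚ)) *
          ∏ i ∈ s, (z i / (i.factorial : ℚ)) ^ f i else 0)]
    refine Finset.sum_congr rfl fun f hf => ?_
    have hfs := (Finset.mem_piAntidiag.1 hf).1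
    by_cases h1 : (∑ i ∈ s, i * f i) = n
    · by_cases h0 : f 0 = 0
      · rw [if_pos ⟨h1, h0⟩, if_pos h1]
        have hzprod : ∏ i ∈ s, (z i / (i.factorial : ℚ)) ^ f i = ∏ i ∈ s, d i ^ f i := by
          refine Finset.prod_congr rfl fun i _ => ?_
          rcases Nat.eq_zero_or_pos i with rfl | hi1
          · rw [h0, pow_zero, pow_zero]
          · have hne : (i.factorial : ℚ) ≠ 0 := Nat.cast_ne_zero.2 i.factorial_ne_zero
            have hdi : d i = ((i + r).choose (r + 1) : ℚ) := by
              rw [hd]; simp [Nat.pos_iff_ne_zero.1 hi1]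
            rw [hz i hi1, hdi, mul_comm, mul_div_assoc, div_self hne, mul_one]
        rw [hzprod]
        have hm := Nat.multinomial_spec s f
        rw [hfs] at hm
        have hm' : (∏ i ∈ s, ((f i).factorial : ℚ)) * (Nat.multinomial s f : ℚ)
            = (k.factorial : ℚ) := by exact_mod_cast congrArg (Nat.cast (R := ℚ)) hm
        have hne : (∏ i ∈ s, ((f i).factorial : ℚ)) ≠ 0 :=
          Finset.prod_ne_zero_iff.2 fun i _ => Nat.cast_ne_zero.2 (f i).factorial_ne_zero
        have hkne : (k.factorial : ℚ) ≠ 0 := Nat.cast_ne_zero.2 k.factorial_ne_zero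
        rw [← mul_assoc]
        congr 1
        rw [div_eq_iff hne, mul_assoc, mul_comm (Nat.multinomial s f : ℚ), hm',
          div_mul_cancel₀ _ hkne]
      · rw [if_neg (fun hh => h0 hh.2), if_pos h1]
        have : ∏ i ∈ s, d i ^ f i = 0 := by
          refine Finset.prod_eq_zero (Finset.mem_range.2 (Nat.succ_pos n)) ?_
          rw [hd]; simp [zero_pow h0]
        rw [this, mul_zero, mul_zero]
    · rw [if_neg (fun hh => h1 hh.1), if_neg h1, mul_zero]
  rw [hA]
  congr 1
  -- Step B : coeff n (P^k) via power series
  set G : ℚ⟦X⟧ := (invOneSubPow ℚ (r + 2)).val with hG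
  set F : ℚ⟦X⟧ := X * G with hF
  have hFcoeff : ∀ m, PowerSeries.coeff m F = d m := by
    intro m
    rw [hF, ← pow_one (X : ℚ⟦X⟧), coeff_X_pow_mul']
    rcases Nat.eq_zero_or_pos m with rfl | hm
    · rw [if_neg (by omega), hd]; simp
    · rw [if_pos (by omega : 1 ≤ m), hG, show r + 2 = (r + 1) + 1 from rfl,
        invOneSubPow_val_succ_eq_mk_add_choose, coeff_mk, hd]
      simp only [if_neg (Nat.pos_iff_ne_zero.1 hm)]
      congr 2
      omega
  have hPcoeff : ∀ m, (P.coeff m) = if m ≤ n then d m else 0 := by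
    intro m
    rw [hP, Polynomial.finset_sum_coeff]
    simp only [Polynomial.coeff_C_mul, Polynomial.coeff_X_pow, mul_ite, mul_one, mul_zero]
    rw [Finset.sum_ite_eq s m d]
    simp [hs, Nat.lt_succ_iff]
  have hdvd : (X : ℚ⟦X⟧) ^ (n + 1) ∣ F ^ k - (P : ℚ⟦X⟧) ^ k := by
    refine dvd_trans ?_ (sub_dvd_pow_sub_pow _ _ k)
    rw [X_pow_dvd_iff]
    intro m hm
    rw [map_sub, hFcoeff, Polynomial.coeff_coe, hPcoeff, if_pos (Nat.lt_succ_iff.1 hm), sub_self]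
  have hcoeffeq : (P ^ k).coeff n = PowerSeries.coeff n (F ^ k) := by
    have h0 := X_pow_dvd_iff.1 hdvd n (Nat.lt_succ_self n)
    rw [map_sub, sub_eq_zero, ← Polynomial.coe_pow, Polynomial.coeff_coe] at h0
    exact h0.symm
  rw [hcoeffeq]
  have hpos : 0 < (r + 2) * k := by positivity
  rw [hF, mul_pow, hG, ← Units.val_pow_eq_pow_val, invOneSubPow_pow,
    invOneSubPow_val_eq_mk_sub_one_add_choose_of_pos _ _ hpos, coeff_X_pow_mul', if_pos hkn,
    coeff_mk]
  norm_cast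
  have h1 : (r + 2) * k = (r + 1) * k + k := by ring
  have h3 : k ≤ (r + 1) * k := Nat.le_mul_of_pos_left k (by omega)
  have hsym : ((r + 2) * k - 1 + (n - k)).choose ((r + 2) * k - 1)
      = ((r + 2) * k - 1 + (n - k)).choose (n - k) := by
    rw [Nat.add_comm ((r + 2) * k - 1) (n - k)]
    have := Nat.choose_symm (Nat.le_add_left ((r + 2) * k - 1) (n - k))
    rw [Nat.add_sub_cancel] at this
    exact this.symm
  rw [hsym]
  congr 1
  omega
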